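/- For every square matrix A of size n×n over the reals and every random vector r in R^n with finite support, the expected value of det(A - r rᵀ) equals (1 - d/dt) det(A + t·E[r rᵀ]) evaluated at t = 0. -/

import Mathlib

open Matrix BigOperators

section Aux

variable {n : ℕ}

private lemma det_piecewise_smul (A B : Matrix (Fin n) (Fin n) ℝ) (t : ℝ)
    (s : Finset (Fin n)) :
    Matrix.det (s.piecewise (t • B) A) = t ^ s.card * Matrix.det (s.piecewise B A) := by
  have h := (Matrix.detRowAlternating :
      (Fin n → ℝ) [⋀^Fin n]→ₗ[ℝ] ℝ).toMultilinearMap.map_piecewise_smul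
      (fun i => if i ∈ s then t else 1) (s.piecewise B A) s
  have e1 : s.piecewise (t • B) A =
      s.piecewise (fun i => (if i ∈ s then t else 1) • (s.piecewise B A) i)
        (s.piecewise B A) := by
    funext i
    by_cases hi : i ∈ s
    · simp only [Finset.piecewise_eq_of_mem _ _ _ hi, if_pos hi]
      simp only [Finset.piecewise, if_pos hi]; rfl
    · simp only [Finset.piecewise, if_neg hi]
  have e2 : (∏ i ∈ s, (if i ∈ s then t else 1)) = t ^ s.card := by
    rw [Finset.prod_congr rfl (fun i hi => if_pos hi), Finset.prod_const]
  calc Matrix.det (s.piecewise (t • B) A)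
      = (Matrix.detRowAlternating :
          (Fin n → ℝ) [⋀^Fin n]→ₗ[ℝ] ℝ).toMultilinearMap
          (s.piecewise (fun i => (if i ∈ s then t else 1) • (s.piecewise B A) i)
            (s.piecewise B A)) := by rw [← e1]; rfl
    _ = t ^ s.card * Matrix.det (s.piecewise B A) := by
        rw [h, e2]; simp [smul_eq_mul]; exact Or.inl rfl

private lemma det_add_smul_expand (A B : Matrix (Fin n) (Fin n) ℝ) (t : ℝ) :
    (A + t • B).det = ∑ s : Finset (Fin n), t ^ s.card * Matrix.det (s.piecewise B A) := by
  have h := (Matrix.detRowAlternating :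
      (Fin n → ℝ) [⋀^Fin n]→ₗ[ℝ] ℝ).toMultilinearMap.map_add_univ (t • B) A
  calc (A + t • B).det = ((t • B) + A).det := by rw [add_comm]
    _ = ∑ s : Finset (Fin n), Matrix.det (s.piecewise (t • B) A) := h
    _ = ∑ s : Finset (Fin n), t ^ s.card * Matrix.det (s.piecewise B A) := by
        exact Finset.sum_congr rfl fun s _ => det_piecewise_smul A B t s

private lemma sum_ite_card_one {M : Type*} [AddCommMonoid M]
    (g : Finset (Fin n) → M) :
    (∑ s : Finset (Fin n), if s.card = 1 then g s else 0) = ∑ i : Fin n, g {i} := by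
  classical
  rw [← Finset.sum_filter]
  rw [show Finset.univ.filter (fun s : Finset (Fin n) => s.card = 1)
      = Finset.univ.image (fun i : Fin n => ({i} : Finset (Fin n))) from by
    ext s
    simp [Finset.card_eq_one, eq_comm]]
  exact Finset.sum_image (fun a _ b _ h => Finset.singleton_injective h)

private lemma det_updateRow_sum' {m : ℕ} (A : Matrix (Fin n) (Fin n) ℝ) (j : Fin n)
    (w : Fin m → Fin n → ℝ) :
    (A.updateRow j (∑ i, w i)).det = ∑ i, (A.updateRow j (w i)).det :=
  (Matrix.detRowAlternating :
    (Fin n → ℝ) [⋀^Fin n]→ₗ[ℝ] ℝ).map_update_sum Finset.univ j w A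

private lemma hasDerivAt_det_add_smul (A B : Matrix (Fin n) (Fin n) ℝ) :
    HasDerivAt (fun t : ℝ => (A + t • B).det)
      (∑ i : Fin n, (A.updateRow i (B i)).det) 0 := by
  have h : HasDerivAt
      (fun t : ℝ => ∑ s : Finset (Fin n), t ^ s.card * Matrix.det (s.piecewise B A))
      (∑ s : Finset (Fin n),
        ((s.card : ℝ) * (0 : ℝ) ^ (s.card - 1)) * Matrix.det (s.piecewise B A)) 0 :=
    HasDerivAt.fun_sum fun s _ => (hasDerivAt_pow s.card 0).mul_const _
  have hfun : (fun t : ℝ => (A + t • B).det)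
      = fun t : ℝ => ∑ s : Finset (Fin n), t ^ s.card * Matrix.det (s.piecewise B A) :=
    funext fun t => det_add_smul_expand A B t
  rw [hfun]
  convert h using 1
  have key : ∀ s : Finset (Fin n),
      ((s.card : ℝ) * (0 : ℝ) ^ (s.card - 1)) * Matrix.det (s.piecewise B A)
      = if s.card = 1 then Matrix.det (s.piecewise B A) else 0 := by
    intro s
    generalize s.card = k
    match k with
    | 0 => simp
    | 1 => simp
    | (k + 2) => simp [pow_succ]
  rw [Finset.sum_congr rfl fun s _ => key s, sum_ite_card_one]
  refine Finset.sum_congr rfl fun i _ => ?_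
  erw [Finset.piecewise_singleton]
  rfl

private lemma det_piecewise_vecMulVec_eq_zero (A : Matrix (Fin n) (Fin n) ℝ)
    (v : Fin n → ℝ) (s : Finset (Fin n)) (hs : 2 ≤ s.card) :
    Matrix.det (s.piecewise (Matrix.vecMulVec v v) A) = 0 := by
  obtain ⟨i, j, hi, hj, hij⟩ := Finset.one_lt_card_iff.mp (show 1 < s.card by omega)
  set M : Matrix (Fin n) (Fin n) ℝ := s.piecewise (Matrix.vecMulVec v v) A with hM
  have hrow : ∀ k ∈ s, M k = v k • v := by
    intro k hk
    funext l
    simp [hM, Finset.piecewise, hk, Matrix.vecMulVec_apply, smul_eq_mul]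
  have h1 : M = M.updateRow i (v i • v) := by
    rw [← hrow i hi, Matrix.updateRow_eq_self]
  have h2 : (M.updateRow i v).updateRow j (v j • v) = M.updateRow i v := by
    have hj2 : (M.updateRow i v) j = v j • v := by
      rw [Matrix.updateRow_ne hij.symm]; exact hrow j hj
    conv_lhs => rw [← hj2]
    exact Matrix.updateRow_eq_self _ _
  rw [h1, Matrix.det_updateRow_smul]
  rw [← h2, Matrix.det_updateRow_smul]
  have : ((M.updateRow i v).updateRow j v).det = 0 := by
    refine Matrix.det_zero_of_row_eq hij ?_
    rw [Matrix.updateRow_ne hij, Matrix.updateRow_self, Matrix.updateRow_self]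
  rw [this, mul_zero, mul_zero]

private lemma det_sub_vecMulVec (A : Matrix (Fin n) (Fin n) ℝ) (v : Fin n → ℝ) :
    (A - Matrix.vecMulVec v v).det
      = A.det - ∑ i : Fin n, v i * (A.updateRow i v).det := by
  have h0 : A - Matrix.vecMulVec v v = A + (-1 : ℝ) • Matrix.vecMulVec v v := by
    rw [neg_one_smul]; exact sub_eq_add_neg _ _
  rw [h0, det_add_smul_expand]
  have key : ∀ s : Finset (Fin n),
      (-1 : ℝ) ^ s.card * Matrix.det (s.piecewise (Matrix.vecMulVec v v) A)
      = (if s = ∅ then A.det else 0)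
        + (if s.card = 1 then
            -Matrix.det (s.piecewise (Matrix.vecMulVec v v) A) else 0) := by
    intro s
    match h : s.card with
    | 0 =>
      have : s = ∅ := Finset.card_eq_zero.mp h
      subst this
      simp [Finset.piecewise]; exact congrArg Matrix.det (Finset.piecewise_empty _ _)
    | 1 =>
      have hne : s ≠ ∅ := by
        intro hs; subst hs; simp at h
      simp [h, hne]
    | (k + 2) =>
      have hz := det_piecewise_vecMulVec_eq_zero A v s (by omega)
      have hne : s ≠ ∅ := by
        intro hs; subst hs; simp at h
      simp [h, hne, hz]
  rw [Finset.sum_congr rfl fun s _ => key s, Finset.sum_add_distrib]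
  rw [Finset.sum_ite_eq' Finset.univ (∅ : Finset (Fin n)) (fun _ => A.det)]
  rw [sum_ite_card_one (fun s => -Matrix.det (s.piecewise (Matrix.vecMulVec v v) A))]
  simp only [Finset.mem_univ, if_true]
  rw [sub_eq_add_neg, ← Finset.sum_neg_distrib]
  congr 1
  refine Finset.sum_congr rfl fun i _ => ?_
  erw [Finset.piecewise_singleton]
  have : Matrix.vecMulVec v v i = v i • v := by
    funext l; simp [Matrix.vecMulVec_apply, smul_eq_mul]
  rw [this]
  have hupd : (Function.update A i (v i • v)) = A.updateRow i (v i • v) := rfl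
  rw [hupd, Matrix.det_updateRow_smul]

end Aux

/-- For every square matrix `A` and every random vector `r` with finite support
(values `v i` with probabilities `p i`),
`E det(A - r rᵀ) = (1 - ∂t) det(A + t ⬝ E[r rᵀ]) |_{t=0}`. -/
theorem expected_det_rank_one_update
    (n ℓ : ℕ) (A : Matrix (Fin n) (Fin n) ℝ)
    (v : Fin ℓ → Fin n → ℝ) (p : Fin ℓ → ℝ)
    (hp : ∀ i, 0 ≤ p i) (hp1 : ∑ i, p i = 1) :
    ∑ i, p i * (A - Matrix.vecMulVec (v i) (v i)).det =
      (fun t : ℝ => (A + t • ∑ i, p i • Matrix.vecMulVec (v i) (v i)).det) 0 -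
        deriv (fun t : ℝ => (A + t • ∑ i, p i • Matrix.vecMulVec (v i) (v i)).det) 0 := by
  classical
  set B : Matrix (Fin n) (Fin n) ℝ := ∑ i, p i • Matrix.vecMulVec (v i) (v i) with hB
  have hval : (fun t : ℝ => (A + t • B).det) 0 = A.det := by simp
  have hderiv : deriv (fun t : ℝ => (A + t • B).det) 0
      = ∑ j : Fin n, (A.updateRow j (B j)).det :=
    (hasDerivAt_det_add_smul A B).deriv
  rw [hval, hderiv]
  -- compute the derivative sum
  have hBrow : ∀ j : Fin n, B j = ∑ i, (p i * v i j) • v i := by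
    intro j
    rw [hB]
    erw [Finset.sum_apply]
    refine Finset.sum_congr rfl fun i _ => ?_
    funext l
    simp [Matrix.vecMulVec_apply, smul_eq_mul, mul_assoc]
  have hsum : ∑ j : Fin n, (A.updateRow j (B j)).det
      = ∑ i, p i * ∑ j : Fin n, v i j * (A.updateRow j (v i)).det := by
    have h1 : ∀ j : Fin n, (A.updateRow j (B j)).det
        = ∑ i, p i * (v i j * (A.updateRow j (v i)).det) := by
      intro j
      rw [hBrow j, det_updateRow_sum']
      refine Finset.sum_congr rfl fun i _ => ?_
      rw [Matrix.det_updateRow_smul]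
      ring
    rw [Finset.sum_congr rfl fun j _ => h1 j, Finset.sum_comm]
    refine Finset.sum_congr rfl fun i _ => ?_
    rw [Finset.mul_sum]
  rw [hsum]
  have hLHS : ∀ i, p i * (A - Matrix.vecMulVec (v i) (v i)).det
      = p i * A.det - p i * ∑ j : Fin n, v i j * (A.updateRow j (v i)).det := by
    intro i
    rw [det_sub_vecMulVec, mul_sub]
  rw [Finset.sum_congr rfl fun i _ => hLHS i, Finset.sum_sub_distrib,
    ← Finset.sum_mul, hp1, one_mul]
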